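/- For every real z with 0 < |z| < γ, where γ = 3 − 2√2, the series Σ_{j=0}^{∞} V_j·z^j converges and its sum equals (1 − z − √(1 − z/γ)·√(1 − γz)) / (2z). -/

import Mathlib

private lemma tri_le (a : ℕ → ℝ) (ha : ∀ i, 0 ≤ a i) (n : ℕ) :
    ∑ j ∈ Finset.range n, ∑ i ∈ Finset.range (j+1), a i * a (j-i)
      ≤ (∑ i ∈ Finset.range n, a i) * (∑ i ∈ Finset.range n, a i) := by
  have h1 : ∀ j, ∑ i ∈ Finset.range (j+1), a i * a (j-i)
      = ∑ p ∈ Finset.HasAntidiagonal.antidiagonal j, a p.1 * a p.2 := by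
    intro j
    rw [Finset.Nat.sum_antidiagonal_eq_sum_range_succ_mk]
  simp_rw [h1]
  rw [← Finset.sum_biUnion]
  · rw [Finset.sum_mul_sum, ← Finset.sum_product']
    apply Finset.sum_le_sum_of_subset_of_nonneg
    · intro p hp
      simp only [Finset.mem_biUnion, Finset.mem_range, Finset.HasAntidiagonal.mem_antidiagonal] at hp
      obtain ⟨j, hj, hpj⟩ := hp
      simp only [Finset.mem_product, Finset.mem_range]
      omega
    · intro p _ _
      exact mul_nonneg (ha _) (ha _)
  · intro x hx y hy hxy
    apply Finset.disjoint_left.mpr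
    intro p hp hq
    simp only [Finset.HasAntidiagonal.mem_antidiagonal] at hp hq
    omega

private lemma V_nonneg (V : ℕ → ℝ) (hV0 : V 0 = 1)
    (hVrec : ∀ j : ℕ, V (j + 1) = (∑ i ∈ Finset.range (j + 1), V i * V (j - i)) + V j) :
    ∀ j, 0 ≤ V j := by
  intro j
  induction j using Nat.strong_induction_on with
  | _ j ih =>
    match j with
    | 0 => rw [hV0]; norm_num
    | j+1 =>
      rw [hVrec]
      apply add_nonneg
      · apply Finset.sum_nonneg
        intro i hi
        rw [Finset.mem_range] at hi
        exact mul_nonneg (ih i (by omega)) (ih (j-i) (by omega))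
      · exact ih j (by omega)

set_option maxHeartbeats 800000 in
private lemma partial_bound (V : ℕ → ℝ) (hV0 : V 0 = 1)
    (hVrec : ∀ j : ℕ, V (j + 1) = (∑ i ∈ Finset.range (j + 1), V i * V (j - i)) + V j) :
    ∀ n, ∑ j ∈ Finset.range n, V j * (3 - 2 * Real.sqrt 2) ^ j ≤ 1 + Real.sqrt 2 := by
  have h2 : Real.sqrt 2 ^ 2 = 2 := Real.sq_sqrt (by norm_num)
  have h2n : (0:ℝ) ≤ Real.sqrt 2 := Real.sqrt_nonneg 2
  have h2lb : (1:ℝ) < Real.sqrt 2 := by nlinarith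
  have h2ub : Real.sqrt 2 < 1.5 := by nlinarith
  set γ : ℝ := 3 - 2 * Real.sqrt 2 with hγ
  have hγpos : 0 < γ := by rw [hγ]; nlinarith
  set a : ℕ → ℝ := fun j => V j * γ ^ j with ha
  have hanonneg : ∀ j, 0 ≤ a j := fun j =>
    mul_nonneg (V_nonneg V hV0 hVrec j) (pow_nonneg hγpos.le j)
  intro n
  induction n with
  | zero => simp; nlinarith
  | succ n ihn =>
    have hPnonneg : 0 ≤ ∑ j ∈ Finset.range n, a j := Finset.sum_nonneg fun j _ => hanonneg j
    have key : ∑ j ∈ Finset.range (n+1), a j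
        = 1 + γ * (∑ j ∈ Finset.range n, ∑ i ∈ Finset.range (j+1), a i * a (j-i))
          + γ * ∑ j ∈ Finset.range n, a j := by
      rw [Finset.sum_range_succ']
      have h0 : a 0 = 1 := by simp [ha, hV0]
      rw [h0]
      have hterm : ∀ j, a (j+1)
          = γ * (∑ i ∈ Finset.range (j+1), a i * a (j-i)) + γ * a j := by
        intro j
        have hsum : ∑ i ∈ Finset.range (j+1), a i * a (j-i)
            = (∑ i ∈ Finset.range (j+1), V i * V (j-i)) * γ ^ j := by
          rw [Finset.sum_mul]
          apply Finset.sum_congr rfl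
          intro i hi
          rw [Finset.mem_range] at hi
          have hzz : γ ^ i * γ ^ (j - i) = γ ^ j := by
            rw [← pow_add]; congr 1; omega
          calc a i * a (j-i) = (V i * V (j-i)) * (γ ^ i * γ ^ (j-i)) := by
                simp only [ha]; ring
            _ = V i * V (j - i) * γ ^ j := by rw [hzz]
        rw [hsum, ha]
        simp only
        rw [hVrec j]
        ring
      rw [Finset.sum_congr rfl (fun j _ => hterm j), Finset.sum_add_distrib,
        ← Finset.mul_sum, ← Finset.mul_sum]
      ring
    have htri := tri_le a hanonneg n
    rw [key]
    have e1 : γ * (∑ j ∈ Finset.range n, ∑ i ∈ Finset.range (j+1), a i * a (j-i))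
        ≤ γ * ((∑ j ∈ Finset.range n, a j) * (∑ j ∈ Finset.range n, a j)) :=
      mul_le_mul_of_nonneg_left htri hγpos.le
    have e2 : (∑ j ∈ Finset.range n, a j) * (∑ j ∈ Finset.range n, a j)
        ≤ (1 + Real.sqrt 2) * (1 + Real.sqrt 2) := mul_self_le_mul_self hPnonneg ihn
    have e3 : γ * ((∑ j ∈ Finset.range n, a j) * (∑ j ∈ Finset.range n, a j))
        ≤ γ * ((1 + Real.sqrt 2) * (1 + Real.sqrt 2)) :=
      mul_le_mul_of_nonneg_left e2 hγpos.le
    have e4 : γ * (∑ j ∈ Finset.range n, a j) ≤ γ * (1 + Real.sqrt 2) :=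
      mul_le_mul_of_nonneg_left ihn hγpos.le
    nlinarith [e1, e3, e4, h2]

set_option maxHeartbeats 2000000 in
theorem stmt_15 (V : ℕ → ℝ) (hV0 : V 0 = 1)
    (hVrec : ∀ j : ℕ, V (j + 1) = (∑ i ∈ Finset.range (j + 1), V i * V (j - i)) + V j) :
    ∀ z : ℝ, 0 < |z| → |z| < 3 - 2 * Real.sqrt 2 →
      HasSum (fun j : ℕ => V j * z ^ j)
        ((1 - z - Real.sqrt (1 - z / (3 - 2 * Real.sqrt 2))
            * Real.sqrt (1 - (3 - 2 * Real.sqrt 2) * z)) / (2 * z)) := by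
  have h2 : Real.sqrt 2 ^ 2 = 2 := Real.sq_sqrt (by norm_num)
  have h2n : (0:ℝ) ≤ Real.sqrt 2 := Real.sqrt_nonneg 2
  have h2lb : (1:ℝ) < Real.sqrt 2 := by nlinarith
  have h2ub : Real.sqrt 2 < 1.5 := by nlinarith
  set γ : ℝ := 3 - 2 * Real.sqrt 2 with hγ
  have hγpos : 0 < γ := by rw [hγ]; nlinarith
  have hγ1 : γ < 1 := by rw [hγ]; nlinarith
  have hVn := V_nonneg V hV0 hVrec
  -- summability of the majorant
  have hanonneg : ∀ j, 0 ≤ V j * γ ^ j := fun j =>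
    mul_nonneg (hVn j) (pow_nonneg hγpos.le j)
  have hsuma : Summable (fun j => V j * γ ^ j) :=
    summable_of_sum_range_le hanonneg (partial_bound V hV0 hVrec)
  have htsuma : ∑' j, V j * γ ^ j ≤ 1 + Real.sqrt 2 :=
    Real.tsum_le_of_sum_range_le hanonneg (partial_bound V hV0 hVrec)
  clear_value γ
  intro z hz0 hzγ
  have hzne : z ≠ 0 := fun h => by simp [h] at hz0
  -- norm bound
  have hbound : ∀ j, ‖V j * z ^ j‖ ≤ V j * γ ^ j := by
    intro j
    rw [norm_mul, norm_pow, Real.norm_eq_abs, Real.norm_eq_abs, abs_of_nonneg (hVn j)]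
    exact mul_le_mul_of_nonneg_left (pow_le_pow_left₀ (abs_nonneg z) hzγ.le j) (hVn j)
  have hnsum : Summable (fun j => ‖V j * z ^ j‖) :=
    Summable.of_nonneg_of_le (fun j => norm_nonneg _) hbound hsuma
  have hsum : Summable (fun j => V j * z ^ j) := hnsum.of_norm
  set s : ℝ := ∑' j, V j * z ^ j with hs
  clear_value s
  -- Cauchy product : functional equation
  have hcauchy : s * s = ∑' n, (V (n+1) - V n) * z ^ n := by
    rw [hs, tsum_mul_tsum_eq_tsum_sum_range_of_summable_norm hnsum hnsum]
    apply tsum_congr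
    intro n
    have : ∀ k ∈ Finset.range (n+1),
        (V k * z ^ k) * (V (n-k) * z ^ (n-k)) = (V k * V (n-k)) * z ^ n := by
      intro k hk
      rw [Finset.mem_range] at hk
      have hzz : z ^ k * z ^ (n - k) = z ^ n := by
        rw [← pow_add]; congr 1; omega
      calc (V k * z ^ k) * (V (n-k) * z ^ (n-k))
          = (V k * V (n-k)) * (z ^ k * z ^ (n-k)) := by ring
        _ = (V k * V (n-k)) * z ^ n := by rw [hzz]
    rw [Finset.sum_congr rfl this, ← Finset.sum_mul]
    have := hVrec n
    have : ∑ i ∈ Finset.range (n + 1), V i * V (n - i) = V (n+1) - V n := by linarith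
    rw [this]
  have hsum1 : Summable (fun n => V (n+1) * z ^ (n+1)) :=
    ((summable_nat_add_iff 1).2 hsum : _)
  have hshim : s = 1 + ∑' n, V (n+1) * z ^ (n+1) := by
    rw [hs, Summable.tsum_eq_zero_add hsum, hV0, pow_zero, one_mul]
  have hsum2 : Summable (fun n => V n * z ^ (n+1)) := by
    have := hsum.mul_right z
    apply this.congr
    intro n
    rw [pow_succ]; ring
  have htsum2 : ∑' n, V n * z ^ (n+1) = s * z := by
    rw [hs, ← tsum_mul_right]
    apply tsum_congr
    intro n
    rw [pow_succ]; ring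
  have hquad : z * s ^ 2 + (z - 1) * s + 1 = 0 := by
    have hzss : z * (s * s) = ∑' n, (V (n+1) * z ^ (n+1) - V n * z ^ (n+1)) := by
      rw [hcauchy, ← tsum_mul_left]
      apply tsum_congr
      intro n
      rw [pow_succ]; ring
    rw [Summable.tsum_sub hsum1 hsum2, htsum2] at hzss
    have h1 : ∑' n, V (n+1) * z ^ (n+1) = s - 1 := by linarith [hshim]
    rw [h1] at hzss
    linear_combination hzss
  -- bounds on s
  have hshift_nonneg : ∀ n, (0:ℝ) ≤ V (n+1) * γ ^ (n+1) := fun n => hanonneg (n+1)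
  have hsuma1 : Summable (fun n => V (n+1) * γ ^ (n+1)) :=
    ((summable_nat_add_iff 1).2 hsuma : _)
  have hγshift : ∑' n, V (n+1) * γ ^ (n+1) = (∑' j, V j * γ ^ j) - 1 := by
    have := Summable.tsum_eq_zero_add hsuma
    rw [hV0, pow_zero, one_mul] at this
    linarith
  have hnsum1 : Summable (fun n => ‖V (n+1) * z ^ (n+1)‖) :=
    ((summable_nat_add_iff 1).2 hnsum : _)
  have hsdist : |s - 1| ≤ Real.sqrt 2 := by
    have h1 : |∑' n, V (n+1) * z ^ (n+1)| ≤ ∑' n, V (n+1) * γ ^ (n+1) := by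
      calc |∑' n, V (n+1) * z ^ (n+1)| ≤ ∑' n, ‖V (n+1) * z ^ (n+1)‖ := by
            rw [← Real.norm_eq_abs]
            exact norm_tsum_le_tsum_norm hnsum1
        _ ≤ ∑' n, V (n+1) * γ ^ (n+1) :=
            Summable.tsum_le_tsum (fun n => hbound (n+1)) hnsum1 hsuma1
    have h2' : ∑' n, V (n+1) * γ ^ (n+1) ≤ Real.sqrt 2 := by
      rw [hγshift]; linarith [htsuma]
    have h3 : s - 1 = ∑' n, V (n+1) * z ^ (n+1) := by rw [hshim]; ring
    rw [h3]
    linarith [h1, h2', abs_le.mp (le_refl |∑' n, V (n+1) * z ^ (n+1)|)]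
  have hsub : s ≤ 1 + Real.sqrt 2 := by
    have := abs_le.mp hsdist
    linarith [this.2]
  have hslb : 1 - Real.sqrt 2 ≤ s := by
    have := abs_le.mp hsdist
    linarith [this.1]
  -- the square root quantities
  have hzlt : z < γ := lt_of_le_of_lt (le_abs_self z) hzγ
  have hzgt : -γ < z := by
    have := neg_abs_le z
    linarith [hzγ]
  have hf1 : 0 < 1 - z / γ := by
    rw [sub_pos, div_lt_one hγpos]; exact hzlt
  have hf2 : 0 < 1 - γ * z := by
    have h' := mul_lt_mul_of_pos_left hzlt hγpos
    nlinarith [h', hγpos, hγ1, hzgt, mul_lt_mul_of_pos_left hzgt hγpos]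
  set A : ℝ := Real.sqrt (1 - z / γ) with hA
  set B : ℝ := Real.sqrt (1 - γ * z) with hB
  clear_value A B
  have hABpos : 0 < A * B := by
    rw [hA, hB]; exact mul_pos (Real.sqrt_pos.mpr hf1) (Real.sqrt_pos.mpr hf2)
  have hABsq : (A * B) ^ 2 = z ^ 2 - 6 * z + 1 := by
    rw [mul_pow, hA, hB, Real.sq_sqrt hf1.le, Real.sq_sqrt hf2.le]
    have hzdiv : z / γ = z * (3 + 2 * Real.sqrt 2) := by
      rw [div_eq_iff hγpos.ne', hγ]
      linear_combination 4 * z * h2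
    rw [hzdiv, hγ]
    linear_combination (-4 * z ^ 2) * h2
  -- u = 1 - z - 2 z s
  set u : ℝ := 1 - z - 2 * z * s with hu
  clear_value u
  have husq : u ^ 2 = z ^ 2 - 6 * z + 1 := by
    rw [hu]; linear_combination 4 * z * hquad
  have hupos : 0 < u := by
    rcases lt_or_gt_of_ne hzne with hneg | hpos
    · rw [hu]; nlinarith [hslb]
    · rw [hu]
      have hz1 : z * (3 + 2 * Real.sqrt 2) < 1 := by
        have hγinv : γ * (3 + 2 * Real.sqrt 2) = 1 := by rw [hγ]; nlinarith
        nlinarith [hzlt, hpos]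
      nlinarith [hsub, hpos]
  have huAB : u = A * B := by
    have hfac : (u - A * B) * (u + A * B) = 0 := by linear_combination husq - hABsq
    rcases mul_eq_zero.mp hfac with h | h
    · linarith
    · nlinarith [hupos, hABpos]
  have hfinal : s = (1 - z - A * B) / (2 * z) := by
    rw [← huAB, hu, eq_div_iff (mul_ne_zero two_ne_zero hzne)]
    ring
  rw [← hfinal, hs]
  exact hsum.hasSum
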